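/- For continuous maps f, g : X → Y and h : X' → Y', D(f × h, g × h) = D(f, g), where f × h : X × X' → Y × Y' denotes the product map. -/

import Mathlib

/-- Homotopic distance: least `n` such that `X` has an open cover by `n+1` open sets on each
of which `f` and `g` restrict to homotopic maps; `⊤` if no such cover exists. -/
noncomputable def hDist {X Y : Type*} [TopologicalSpace X] [TopologicalSpace Y]
    (f g : C(X, Y)) : ℕ∞ :=
  sInf {N : ℕ∞ | ∃ n : ℕ, N = n ∧ ∃ U : Fin (n + 1) → Set X,
    (∀ i, IsOpen (U i)) ∧ (∀ x, ∃ i, x ∈ U i) ∧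
    ∀ i, (f.restrict (U i)).Homotopic (g.restrict (U i))}

section aux

variable {X X' Y Y' : Type*} [TopologicalSpace X] [TopologicalSpace X']
    [TopologicalSpace Y] [TopologicalSpace Y']

lemma aux_prod (f g : C(X, Y)) (h : C(X', Y')) (U : Set X)
    (hfg : (f.restrict U).Homotopic (g.restrict U)) :
    ((f.prodMap h).restrict (U ×ˢ (Set.univ : Set X'))).Homotopic
      ((g.prodMap h).restrict (U ×ˢ (Set.univ : Set X'))) := by
  obtain ⟨H⟩ := hfg
  exact ⟨{
    toFun := fun p => (H (p.1, ⟨p.2.1.1, p.2.2.1⟩), h p.2.1.2)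
    continuous_toFun := by
      apply Continuous.prodMk
      · exact H.continuous.comp (continuous_fst.prodMk
          ((continuous_subtype_val.comp continuous_snd).fst.subtype_mk _))
      · exact h.continuous.comp (continuous_subtype_val.comp continuous_snd).snd
    map_zero_left := fun z => by simp [Prod.map]
    map_one_left := fun z => by simp [Prod.map] }⟩

lemma aux_sect (f g : C(X, Y)) (h : C(X', Y')) (x₀ : X') (W : Set (X × X'))
    (hfg : ((f.prodMap h).restrict W).Homotopic ((g.prodMap h).restrict W)) :
    (f.restrict ((fun x => (x, x₀)) ⁻¹' W)).Homotopic
      (g.restrict ((fun x => (x, x₀)) ⁻¹' W)) := by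
  set U : Set X := (fun x => (x, x₀)) ⁻¹' W with hU
  let σ : C(↥U, ↥W) := ⟨fun x => ⟨(x.1, x₀), x.2⟩,
    (continuous_subtype_val.prodMk continuous_const).subtype_mk _⟩
  let π : C(Y × Y', Y) := ⟨Prod.fst, continuous_fst⟩
  have key := (ContinuousMap.Homotopic.refl π).comp
    (hfg.comp (ContinuousMap.Homotopic.refl σ))
  have e1 : π.comp (((f.prodMap h).restrict W).comp σ) = f.restrict U := by ext x; rfl
  have e2 : π.comp (((g.prodMap h).restrict W).comp σ) = g.restrict U := by ext x; rfl
  rwa [e1, e2] at key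

end aux

theorem hDist_prodMap {X X' Y Y' : Type*} [TopologicalSpace X] [TopologicalSpace X']
    [TopologicalSpace Y] [TopologicalSpace Y'] [Nonempty X']
    (f g : C(X, Y)) (h : C(X', Y')) :
    hDist (f.prodMap h) (g.prodMap h) = hDist f g := by
  unfold hDist
  congr 1
  ext N
  constructor
  · rintro ⟨n, rfl, W, hopen, hcov, hhom⟩
    obtain ⟨x₀⟩ := ‹Nonempty X'›
    refine ⟨n, rfl, fun i => (fun x => (x, x₀)) ⁻¹' W i, fun i =>
      (hopen i).preimage (continuous_id.prodMk continuous_const), fun x => hcov (x, x₀),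
      fun i => aux_sect f g h x₀ (W i) (hhom i)⟩
  · rintro ⟨n, rfl, U, hopen, hcov, hhom⟩
    refine ⟨n, rfl, fun i => U i ×ˢ (Set.univ : Set X'), fun i =>
      (hopen i).prod isOpen_univ, fun z => ?_, fun i => aux_prod f g h (U i) (hhom i)⟩
    obtain ⟨i, hi⟩ := hcov z.1
    exact ⟨i, hi, trivial⟩
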